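/- arXiv:1511.01048 — 5 statements merged into one kernel-verified Lean document; each statement's English description precedes it below -/
import Mathlib

section
/- Let A be a commutative ring and M ∈ Symₙ(A). The set Σ(M) of all vectors v ∈ Aⁿ such that s·M = vvᵀ + N for some sum of squares s ∈ ΣA² and some symmetric matrix N that is a sum of squares, is an A-submodule of Aⁿ. -/
open Matrix

/-- A symmetric matrix is a *sum of squares* if it equals `Qᵀ * Q` for some matrix `Q`. -/
def Matrix.IsSumOfSquares {A : Type*} [CommRing A] {n : ℕ}
    (M : Matrix (Fin n) (Fin n) A) : Prop :=
  ∃ (m : ℕ) (Q : Matrix (Fin m) (Fin n) A), M = Qᵀ * Q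

/-- `Σ(M)`: the set of vectors `v` with `s • M = v vᵀ + N` for some sum of squares
`s ∈ ΣA²` and some sum-of-squares matrix `N`. -/
def SigmaSet {A : Type*} [CommRing A] {n : ℕ} (M : Matrix (Fin n) (Fin n) A) :
    Set (Fin n → A) :=
  {v | ∃ s : A, IsSumSq s ∧ ∃ N : Matrix (Fin n) (Fin n) A,
    N.IsSumOfSquares ∧ s • M = vecMulVec v v + N}

lemma sos_zero {A : Type*} [CommRing A] {n : ℕ} :
    (0 : Matrix (Fin n) (Fin n) A).IsSumOfSquares := by
  refine ⟨0, 0, ?_⟩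
  ext i j
  simp [Matrix.mul_apply]

lemma sos_add {A : Type*} [CommRing A] {n : ℕ} {N₁ N₂ : Matrix (Fin n) (Fin n) A}
    (h₁ : N₁.IsSumOfSquares) (h₂ : N₂.IsSumOfSquares) : (N₁ + N₂).IsSumOfSquares := by
  obtain ⟨m₁, Q₁, rfl⟩ := h₁
  obtain ⟨m₂, Q₂, rfl⟩ := h₂
  refine ⟨m₁ + m₂, (Matrix.fromRows Q₁ Q₂).submatrix finSumFinEquiv.symm id, ?_⟩
  have : ((Matrix.fromRows Q₁ Q₂).submatrix finSumFinEquiv.symm id)ᵀ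
      = (Matrix.fromRows Q₁ Q₂)ᵀ.submatrix id finSumFinEquiv.symm := by
    ext i j; simp [Matrix.submatrix, Matrix.transpose_apply]
  rw [this, Matrix.submatrix_mul_equiv]
  ext i j
  simp [Matrix.mul_apply, Matrix.fromRows_apply_inl, Matrix.fromRows_apply_inr, Fintype.sum_sum_type]

lemma sos_vecMulVec {A : Type*} [CommRing A] {n : ℕ} (v : Fin n → A) :
    (Matrix.vecMulVec v v).IsSumOfSquares := by
  refine ⟨1, Matrix.of (fun _ i => v i), ?_⟩
  ext i j
  simp [Matrix.mul_apply, Matrix.vecMulVec_apply, mul_comm]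

lemma sos_sq_smul {A : Type*} [CommRing A] {n : ℕ} (c : A) {N : Matrix (Fin n) (Fin n) A}
    (h : N.IsSumOfSquares) : ((c * c) • N).IsSumOfSquares := by
  obtain ⟨m, Q, rfl⟩ := h
  refine ⟨m, c • Q, ?_⟩
  ext i j
  simp [Matrix.mul_apply, Finset.mul_sum]
  congr 1; ext k; ring

lemma isSumSq_sq_mul {A : Type*} [CommRing A] {s : A} (c : A) (hs : IsSumSq s) :
    IsSumSq (c * c * s) := by
  induction hs with
  | zero => simpa using IsSumSq.zero
  | @sq_add a s _ ih =>
    have : c * c * (a * a + s) = (c * a) * (c * a) + c * c * s := by ring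
    rw [this]
    exact IsSumSq.sq_add _ ih

theorem sigmaSet_isSubmodule {A : Type*} [CommRing A] {n : ℕ}
    (M : Matrix (Fin n) (Fin n) A) :
    ∃ S : Submodule A (Fin n → A), (S : Set (Fin n → A)) = SigmaSet M := by
  refine ⟨{ carrier := SigmaSet M, zero_mem' := ?_, add_mem' := ?_, smul_mem' := ?_ }, rfl⟩
  · rintro v₁ v₂ ⟨s₁, hs₁, N₁, hN₁, he₁⟩ ⟨s₂, hs₂, N₂, hN₂, he₂⟩
    refine ⟨(s₁ + s₂) + (s₁ + s₂), (hs₁.add hs₂).add (hs₁.add hs₂),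
      Matrix.vecMulVec (v₁ - v₂) (v₁ - v₂) + ((N₁ + N₁) + (N₂ + N₂)),
      sos_add (sos_vecMulVec _) (sos_add (sos_add hN₁ hN₁) (sos_add hN₂ hN₂)), ?_⟩
    ext i j
    have h1 : s₁ * M i j = v₁ i * v₁ j + N₁ i j := by
      have := congrFun (congrFun he₁ i) j
      simpa [Matrix.vecMulVec_apply] using this
    have h2 : s₂ * M i j = v₂ i * v₂ j + N₂ i j := by
      have := congrFun (congrFun he₂ i) j
      simpa [Matrix.vecMulVec_apply] using this
    simp only [Matrix.smul_apply, Matrix.add_apply, Matrix.vecMulVec_apply, Pi.add_apply,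
      Pi.sub_apply, smul_eq_mul]
    linear_combination 2 * h1 + 2 * h2
  · exact ⟨0, IsSumSq.zero, 0, sos_zero, by ext i j; simp [Matrix.vecMulVec_apply]⟩
  · rintro c v ⟨s, hs, N, hN, he⟩
    refine ⟨c * c * s, isSumSq_sq_mul c hs, (c * c) • N, sos_sq_smul c hN, ?_⟩
    ext i j
    have h : s * M i j = v i * v j + N i j := by
      have := congrFun (congrFun he i) j
      simpa [Matrix.vecMulVec_apply] using this
    simp only [Matrix.smul_apply, Matrix.add_apply, Matrix.vecMulVec_apply, Pi.smul_apply,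
      smul_eq_mul]
    linear_combination (c * c) * h
end

section
/- Let A be a commutative ring, f ∈ A[X] monic of degree n with companion matrix C, and g ∈ A[X] of degree at most n−1. Then the Bézout matrix satisfies the intertwining relation C·B(f,g) = B(f,g)·Cᵀ. -/
open Polynomial Matrix

/-- `B` is the Bézout matrix of `f` and `g`: in `A[X][Y]` (with `Y` the outer variable),
`f(Y)g(X) - f(X)g(Y) = (Y - X) * Σ_{i,j} B i j • Y^i X^j`. -/
def IsBezoutMatrix {A : Type*} [CommRing A] {n : ℕ} (f g : A[X])
    (B : Matrix (Fin n) (Fin n) A) : Prop :=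
  aeval (X : A[X][X]) f * aeval (C X : A[X][X]) g
      - aeval (C X : A[X][X]) f * aeval (X : A[X][X]) g
    = (X - C X) *
      ∑ i : Fin n, ∑ j : Fin n, C (C (B i j)) * X ^ (i : ℕ) * (C X) ^ (j : ℕ)

/-- The companion matrix of a monic polynomial `f` of degree `n`: the matrix of
multiplication by `X` on `A[X]/(f)` in the basis `1, X, …, X^(n-1)`. -/
def companionMatrix {A : Type*} [CommRing A] (n : ℕ) (f : A[X]) :
    Matrix (Fin n) (Fin n) A :=
  fun i j => if (j : ℕ) + 1 = n then -f.coeff i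
    else if (i : ℕ) = (j : ℕ) + 1 then 1 else 0

section Aux

variable {A : Type*} [CommRing A]

private lemma aux_aevalCX (g : A[X]) : aeval (C X : A[X][X]) g = C g := by
  have : (C X : A[X][X]) = (Polynomial.CAlgHom (R := A)) (X : A[X]) := rfl
  rw [this, aeval_algHom_apply, aeval_X_left_apply]; rfl

private lemma aux_aevalX (f : A[X]) : aeval (X : A[X][X]) f = f.map C := by
  rw [Polynomial.map, aeval_def]
  rw [IsScalarTower.algebraMap_eq A A[X] A[X][X], algebraMap_eq, algebraMap_eq]

private lemma aux_Pcoeff {n : ℕ} (B : Matrix (Fin n) (Fin n) A) (a b : ℕ) :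
    (((∑ i : Fin n, ∑ j : Fin n,
        C (C (B i j)) * X ^ (i : ℕ) * (C X) ^ (j : ℕ)).coeff a).coeff b)
      = if h : a < n ∧ b < n then B ⟨a, h.1⟩ ⟨b, h.2⟩ else 0 := by
  have hterm : ∀ i j : Fin n,
      (((C (C (B i j)) * X ^ (i:ℕ) * (C X) ^ (j:ℕ)).coeff a).coeff b)
        = if a = (i:ℕ) ∧ b = (j:ℕ) then B i j else 0 := by
    intro i j
    rw [← C_pow, mul_right_comm, ← C_mul, coeff_C_mul, coeff_X_pow]
    by_cases h1 : a = (i:ℕ) <;> by_cases h2 : b = (j:ℕ) <;>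
      simp [h1, h2, coeff_C_mul, coeff_X_pow]
  simp only [finset_sum_coeff, hterm]
  by_cases ha : a < n
  · by_cases hb : b < n
    · rw [Finset.sum_eq_single (⟨a, ha⟩ : Fin n)]
      · rw [Finset.sum_eq_single (⟨b, hb⟩ : Fin n)]
        · simp [ha, hb]
        · intro j _ hj
          rw [if_neg]; rintro ⟨-, h2⟩; exact hj (Fin.ext h2.symm)
        · simp
      · intro i _ hi
        apply Finset.sum_eq_zero; intro j _
        rw [if_neg]; rintro ⟨h1, -⟩; exact hi (Fin.ext h1.symm)
      · simp
    · rw [dif_neg (by tauto)]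
      apply Finset.sum_eq_zero; intro i _
      apply Finset.sum_eq_zero; intro j _
      rw [if_neg]; rintro ⟨-, h2⟩; omega
  · rw [dif_neg (by tauto)]
    apply Finset.sum_eq_zero; intro i _
    apply Finset.sum_eq_zero; intro j _
    rw [if_neg]; rintro ⟨h1, -⟩; omega

private lemma aux_sum {n : ℕ} (hn : 0 < n) (c : A) (r : Fin n) (v : Fin n → A) :
    (∑ k : Fin n, (if (k:ℕ)+1 = n then c else if (r:ℕ) = (k:ℕ)+1 then 1 else 0) * v k)
      = c * v ⟨n-1, Nat.sub_lt hn one_pos⟩ +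
        (if hr : 0 < (r:ℕ) then v ⟨(r:ℕ)-1, by omega⟩ else 0) := by
  have hsplit : ∀ k : Fin n,
      (if (k:ℕ)+1 = n then c else if (r:ℕ) = (k:ℕ)+1 then 1 else 0) * v k
        = (if (k:ℕ)+1 = n then c else 0) * v k
          + (if (r:ℕ) = (k:ℕ)+1 then 1 else 0) * v k := by
    intro k
    by_cases h1 : (k:ℕ)+1 = n
    · have h2 : ¬ (r:ℕ) = (k:ℕ)+1 := by have := r.isLt; omega
      have h3 : ¬ (r:ℕ) = n := by have := r.isLt; omega
      simp [h1, h2, h3]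
    · simp [h1]
  simp only [hsplit]
  rw [Finset.sum_add_distrib]
  congr 1
  · rw [Finset.sum_eq_single (⟨n-1, Nat.sub_lt hn one_pos⟩ : Fin n)]
    · rw [if_pos (by simp; omega)]
    · intro k _ hk
      rw [if_neg, zero_mul]
      intro h; exact hk (Fin.ext (by simp; omega))
    · simp
  · split_ifs with hr
    · rw [Finset.sum_eq_single (⟨(r:ℕ)-1, by omega⟩ : Fin n)]
      · rw [if_pos (by simp; omega), one_mul]
      · intro k _ hk
        rw [if_neg, zero_mul]
        intro h; exact hk (Fin.ext (by simp; omega))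
      · simp
    · apply Finset.sum_eq_zero; intro k _
      rw [if_neg (by omega), zero_mul]

end Aux

theorem companion_mul_bezoutMatrix {A : Type*} [CommRing A] {n : ℕ}
    (f g : A[X]) (hf : f.Monic) (hdf : f.natDegree = n) (hdg : g.natDegree ≤ n - 1)
    (B : Matrix (Fin n) (Fin n) A) (hB : IsBezoutMatrix f g B) :
    companionMatrix n f * B = B * (companionMatrix n f)ᵀ := by
  classical
  set e : ℕ → ℕ → A := fun a b => if h : a < n ∧ b < n then B ⟨a, h.1⟩ ⟨b, h.2⟩ else 0
    with he
  set P : A[X][X] :=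
    ∑ i : Fin n, ∑ j : Fin n, C (C (B i j)) * X ^ (i : ℕ) * (C X) ^ (j : ℕ) with hP
  have hc : ∀ a b : ℕ, f.coeff a * g.coeff b - f.coeff b * g.coeff a
      = (((X - C X) * P).coeff a).coeff b := by
    intro a b
    rw [IsBezoutMatrix, aux_aevalCX, aux_aevalX, aux_aevalCX, aux_aevalX] at hB
    rw [← hB]
    simp [coeff_sub, coeff_mul_C, coeff_C_mul, coeff_map]
  have hPc : ∀ a b : ℕ, ((P.coeff a).coeff b) = e a b := fun a b => aux_Pcoeff B a b
  have hez : ∀ a b : ℕ, n ≤ a ∨ n ≤ b → e a b = 0 := by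
    intro a b h
    rw [he]; exact dif_neg (by omega)
  have key : ∀ a b : ℕ,
      (if 0 < a then e (a-1) b else 0) - (if 0 < b then e a (b-1) else 0)
        = f.coeff a * g.coeff b - f.coeff b * g.coeff a := by
    intro a b
    rw [hc a b, sub_mul, coeff_sub, coeff_sub, coeff_C_mul]
    congr 1
    · cases a with
      | zero => simp
      | succ a => rw [coeff_X_mul]; simp [hPc]
    · cases b with
      | zero => simp [coeff_X_mul]
      | succ b => rw [coeff_X_mul]; simp [hPc]
  ext i j
  have hn : 0 < n := i.pos
  have hFn : f.coeff n = 1 := by rw [← hdf]; exact hf.coeff_natDegree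
  have hGn : g.coeff n = 0 :=
    coeff_eq_zero_of_natDegree_lt (lt_of_le_of_lt hdg (Nat.sub_lt hn one_pos))
  have htop : ∀ b : ℕ, e (n-1) b = g.coeff b := by
    intro b
    have h1 := key n b
    have h2 : (if 0 < b then e n (b-1) else 0) = 0 := by
      split_ifs
      · exact hez n (b-1) (Or.inl le_rfl)
      · rfl
    rw [if_pos hn, h2, hFn, hGn] at h1
    linear_combination h1
  have hright : ∀ a : ℕ, e a (n-1) = g.coeff a := by
    intro a
    have h1 := key a n
    have h2 : (if 0 < a then e (a-1) n else 0) = 0 := by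
      split_ifs
      · exact hez (a-1) n (Or.inr le_rfl)
      · rfl
    rw [if_pos hn, h2, hFn, hGn] at h1
    linear_combination -h1
  have heB : ∀ (a b : ℕ) (ha : a < n) (hb : b < n), e a b = B ⟨a, ha⟩ ⟨b, hb⟩ := by
    intro a b ha hb
    simp only [he]
    rw [dif_pos ⟨ha, hb⟩]
  rw [Matrix.mul_apply, Matrix.mul_apply]
  have hL : (∑ k : Fin n, companionMatrix n f i k * B k j)
      = -f.coeff i * e (n-1) j + (if 0 < (i:ℕ) then e ((i:ℕ)-1) j else 0) := by
    rw [show (fun k => companionMatrix n f i k * B k j) = fun k : Fin n =>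
        (if (k:ℕ)+1 = n then -f.coeff i else if (i:ℕ) = (k:ℕ)+1 then 1 else 0) * B k j
      from rfl]
    rw [aux_sum hn (-f.coeff i) i (fun k => B k j)]
    congr 1
    · congr 1
      exact (heB (n-1) j (Nat.sub_lt hn one_pos) j.isLt).symm
    · split_ifs with h
      · exact (heB ((i:ℕ)-1) j (by omega) j.isLt).symm
      · rfl
  have hR : (∑ k : Fin n, B i k * (companionMatrix n f)ᵀ k j)
      = -f.coeff j * e i (n-1) + (if 0 < (j:ℕ) then e i ((j:ℕ)-1) else 0) := by
    have : ∀ k : Fin n, B i k * (companionMatrix n f)ᵀ k j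
        = (if (k:ℕ)+1 = n then -f.coeff j else if (j:ℕ) = (k:ℕ)+1 then 1 else 0) * B i k := by
      intro k
      rw [Matrix.transpose_apply, mul_comm]
      rfl
    rw [Finset.sum_congr rfl (fun k _ => this k)]
    rw [aux_sum hn (-f.coeff j) j (fun k => B i k)]
    congr 1
    · congr 1
      exact (heB i (n-1) i.isLt (Nat.sub_lt hn one_pos)).symm
    · split_ifs with h
      · exact (heB i ((j:ℕ)-1) i.isLt (by omega)).symm
      · rfl
  rw [hL, hR, htop, hright]
  linear_combination key i j
end

section
/- Let K be an ordered field (or real closed field) and f ∈ K[X] a monic polynomial of degree n all of whose roots lie in K and are simple. Then the Bézout matrix B(f, f') of f and its derivative is positive definite over K. -/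
open Polynomial Matrix

section Aux

variable {K : Type*} [CommRing K]

lemma E1_aevalX (t : K) (p : K[X]) :
    (mapRingHom (evalRingHom t)) (aeval (X : K[X][X]) p) = p := by
  rw [aeval_def, hom_eval₂]
  have h1 : (mapRingHom (evalRingHom t)).comp (algebraMap K K[X][X]) = (C : K →+* K[X]) := by
    ext a; simp
  have h2 : (mapRingHom (evalRingHom t)) (X : K[X][X]) = X := by simp
  rw [h1, h2, eval₂_C_X]

lemma E1_aevalCX (t : K) (p : K[X]) :
    (mapRingHom (evalRingHom t)) (aeval (C X : K[X][X]) p) = C (p.eval t) := by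
  rw [aeval_def, hom_eval₂]
  have h1 : (mapRingHom (evalRingHom t)).comp (algebraMap K K[X][X]) = (C : K →+* K[X]) := by
    ext a; simp
  have h2 : (mapRingHom (evalRingHom t)) (C (X : K[X]) : K[X][X]) = C t := by simp
  rw [h1, h2, eval₂_at_apply]

lemma E1_CC (t : K) (a : K) :
    (mapRingHom (evalRingHom t)) (C (C a) : K[X][X]) = C a := by simp

lemma E1_X (t : K) :
    (mapRingHom (evalRingHom t)) (X : K[X][X]) = X := by simp

lemma E1_CX (t : K) :
    (mapRingHom (evalRingHom t)) (C (X : K[X]) : K[X][X]) = C t := by simp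

/-- One-variable specialization of the Bézout identity: substituting `t` for the inner
variable. -/
lemma bezout_spec {n : ℕ} (f g : K[X]) (B : Matrix (Fin n) (Fin n) K)
    (hB : IsBezoutMatrix f g B) (t : K) :
    f * C (g.eval t) - C (f.eval t) * g
      = (X - C t) * ∑ i : Fin n, ∑ j : Fin n, C (B i j) * X ^ (i : ℕ) * C t ^ (j : ℕ) := by
  have h := congrArg (mapRingHom (evalRingHom t)) hB
  simp only [_root_.map_sub, _root_.map_mul, map_sum, _root_.map_pow,
    E1_aevalX, E1_aevalCX, E1_CC, E1_X, E1_CX] at h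
  exact h

end Aux

theorem bezoutMatrix_posDef_of_simple_roots {K : Type*} [Field K] [LinearOrder K] [IsStrictOrderedRing K] {n : ℕ}
    (f : K[X]) (hf : f.Monic) (hdf : f.natDegree = n)
    (r : Fin n → K) (hinj : Function.Injective r)
    (hroots : f = ∏ i : Fin n, (X - C (r i)))
    (B : Matrix (Fin n) (Fin n) K) (hB : IsBezoutMatrix f (derivative f) B) :
    ∀ v : Fin n → K, v ≠ 0 → 0 < v ⬝ᵥ B.mulVec v := by
  classical
  intro v hv
  set g : K[X] := derivative f with hg
  -- all r i are roots of f
  have hfr : ∀ i, f.eval (r i) = 0 := by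
    intro i
    rw [hroots, eval_prod]
    exact Finset.prod_eq_zero (Finset.mem_univ i) (by simp)
  -- derivative is nonzero at each root
  have hgr : ∀ i, g.eval (r i) ≠ 0 := by
    intro i
    have hfi : f = (X - C (r i)) * ∏ j ∈ Finset.univ.erase i, (X - C (r j)) := by
      rw [hroots]
      exact (Finset.mul_prod_erase _ _ (Finset.mem_univ i)).symm
    have : g.eval (r i) = ∏ j ∈ Finset.univ.erase i, (r i - r j) := by
      rw [hg, hfi]
      simp [derivative_mul, eval_prod]
    rw [this]
    refine Finset.prod_ne_zero_iff.mpr fun j hj => sub_ne_zero.mpr ?_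
    exact fun h => (Finset.mem_erase.mp hj).1 (hinj h).symm
  -- the quadratic polynomial values
  set S : Fin n → Fin n → K := fun i j =>
    ∑ k : Fin n, ∑ l : Fin n, B k l * r i ^ (k : ℕ) * r j ^ (l : ℕ) with hS
  -- off-diagonal vanishing
  have hoff : ∀ i j, i ≠ j → S i j = 0 := by
    intro i j hij
    have h := congrArg (fun p => Polynomial.eval (r i) p) (bezout_spec f g B hB (r j))
    simp only [eval_sub, eval_mul, eval_C, eval_X, eval_finset_sum, eval_pow, hfr] at h
    have h' : (0 : K) = (r i - r j) * S i j := by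
      simpa [hS] using h
    have hne : r i - r j ≠ 0 := sub_ne_zero.mpr (fun h => hij (hinj h))
    field_simp at h'
    rcases mul_eq_zero.mp (by linarith : (r i - r j) * S i j = 0) with h' | h'
    · exact absurd h' hne
    · exact h'
  -- diagonal values
  have hdiag : ∀ i, S i i = g.eval (r i) * g.eval (r i) := by
    intro i
    have h := bezout_spec f g B hB (r i)
    rw [hfr i] at h
    simp only [map_zero, zero_mul, sub_zero] at h
    have hd := congrArg (fun p => Polynomial.eval (r i) (derivative p)) h
    simp only [derivative_mul, derivative_sub, derivative_X, derivative_C, sub_zero,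
      eval_add, eval_mul, eval_sub, eval_X, eval_C, sub_self, zero_mul, mul_zero,
      one_mul, add_zero, zero_add, eval_one] at hd
    rw [hS]
    have : Polynomial.eval (r i)
        (∑ k : Fin n, ∑ l : Fin n, C (B k l) * X ^ (k : ℕ) * C (r i) ^ (l : ℕ)) = S i i := by
      simp [hS, eval_finset_sum]
    rw [← hS] at *
    rw [← this]
    linarith [hd]
  -- Vandermonde
  set V : Matrix (Fin n) (Fin n) K := vandermonde r with hV
  have hdet : V.det ≠ 0 := (det_vandermonde_ne_zero_iff).mpr hinj
  have hdetT : Vᵀ.det ≠ 0 := by rwa [det_transpose]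
  have hVBV : V * B * Vᵀ = diagonal (fun i => g.eval (r i) * g.eval (r i)) := by
    ext i j
    have : (V * B * Vᵀ) i j = S i j := by
      simp only [mul_apply, transpose_apply, hV, vandermonde_apply, hS]
      rw [Finset.sum_comm]
      refine Finset.sum_congr rfl fun l _ => ?_
      rw [Finset.sum_mul]
      refine Finset.sum_congr rfl fun k _ => ?_
      ring
    rw [this]
    by_cases hij : i = j
    · subst hij; rw [hdiag, diagonal_apply_eq]
    · rw [hoff i j hij, diagonal_apply_ne _ hij]
  -- invert Vᵀ
  set w : Fin n → K := (Vᵀ)⁻¹ *ᵥ v with hw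
  have hvw : Vᵀ *ᵥ w = v := by
    rw [hw, mulVec_mulVec, mul_nonsing_inv _ (isUnit_iff_ne_zero.mpr hdetT), one_mulVec]
  have hwne : w ≠ 0 := by
    intro h
    apply hv
    rw [← hvw, h, mulVec_zero]
  -- compute the quadratic form
  have hq : v ⬝ᵥ B.mulVec v = w ⬝ᵥ (diagonal (fun i => g.eval (r i) * g.eval (r i))) *ᵥ w := by
    rw [← hVBV, ← hvw, mulVec_transpose, dotProduct_mulVec, vecMul_vecMul,
      ← dotProduct_mulVec, ← mulVec_transpose, mulVec_mulVec]
  rw [hq]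
  obtain ⟨i0, hi0⟩ := Function.ne_iff.mp hwne
  have hi0' : w i0 ≠ 0 := by simpa using hi0
  have hsum : w ⬝ᵥ (diagonal fun i => g.eval (r i) * g.eval (r i)) *ᵥ w
      = ∑ i : Fin n, (g.eval (r i) * w i) * (g.eval (r i) * w i) := by
    simp only [dotProduct, mulVec_diagonal]
    exact Finset.sum_congr rfl fun i _ => by ring
  rw [hsum]
  refine Finset.sum_pos' (fun i _ => mul_self_nonneg _) ⟨i0, Finset.mem_univ i0, ?_⟩
  exact mul_self_pos.mpr (mul_ne_zero (hgr i0) hi0')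
end

section
/- Let A be a commutative ring, f ∈ A[X] monic of degree n with companion matrix C, and let B ∈ Symₙ(A) be an invertible symmetric matrix with C·B = B·Cᵀ. Suppose there exist s ∈ ΣA² and Q ∈ Mat_{m,n}(A) with s·B = Iₙ + Qᵀ Q. Then the (n+m)×(n+m) matrix M = [[C − Qᵀ Q Cᵀ, C Qᵀ],[Q Cᵀ, 0]] is symmetric and its characteristic polynomial is divisible by f. -/
open Polynomial Matrix

lemma companion_row_sum {A : Type*} [CommRing A] {n : ℕ} (f : A[X]) (hf : f.Monic)
    (hdf : f.natDegree = n) (hn : 0 < n) :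
    ∑ i : Fin n, (X : A[X])^(i:ℕ) • (charmatrix (companionMatrix n f)) i
      = f • (Pi.single (⟨n-1, by omega⟩ : Fin n) 1 : Fin n → A[X]) := by
  funext l
  simp only [Finset.sum_apply, Pi.smul_apply, smul_eq_mul, Pi.single_apply, Pi.one_apply,
    charmatrix_apply, diagonal_apply, companionMatrix]
  by_cases hl : (l : ℕ) + 1 = n
  · have hl' : l = (⟨n-1, by omega⟩ : Fin n) := by apply Fin.ext; show (l:ℕ) = n - 1; omega
    simp only [hl, if_true, hl', if_true, mul_one]
    simp only [mul_sub, Finset.sum_sub_distrib, map_neg, mul_neg, Finset.sum_neg_distrib,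
      sub_neg_eq_add]
    have h1 : ∑ i : Fin n, (X:A[X])^(i:ℕ) * (if i = (⟨n-1, by omega⟩ : Fin n) then X else 0)
        = X ^ n := by
      simp only [mul_ite, mul_zero]
      rw [Finset.sum_ite_eq' Finset.univ (⟨n-1, by omega⟩ : Fin n)
        (fun i => (X:A[X])^(i:ℕ) * X)]
      simp only [Finset.mem_univ, if_true]
      rw [← pow_succ]
      congr 1
      omega
    have hn1 : n - 1 + 1 = n := by omega
    simp only [hn1, if_true, map_neg, mul_neg, Finset.sum_neg_distrib, sub_neg_eq_add, h1]
    have hfs := hf.as_sum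
    rw [hdf] at hfs
    conv_rhs => rw [hfs]
    rw [← Fin.sum_univ_eq_sum_range (fun i => C (f.coeff i) * X ^ i) n]
    congr 1
    exact Finset.sum_congr rfl (fun x _ => mul_comm _ _)
  · have hll : l ≠ (⟨n-1, by omega⟩ : Fin n) := by
      intro h
      apply hl
      have := congrArg Fin.val h
      simp only [] at this
      omega
    have hlt : (l:ℕ) + 1 < n := by omega
    have hcond : ∀ x : Fin n, ((x:ℕ) = (l:ℕ)+1) = (x = (⟨(l:ℕ)+1, hlt⟩ : Fin n)) := by
      intro x
      simp [Fin.ext_iff]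
    simp only [hl, if_false, hll, mul_zero, hcond]
    simp only [mul_sub, Finset.sum_sub_distrib, mul_ite, mul_zero, mul_one,
      apply_ite (fun a : A => C a), map_zero]
    rw [Finset.sum_ite_eq' Finset.univ l (fun x => (X:A[X])^(x:ℕ) * X),
      Finset.sum_ite_eq' Finset.univ (⟨(l:ℕ)+1, hlt⟩ : Fin n)
        (fun x => (X:A[X])^(x:ℕ) * C 1)]
    simp [pow_succ]

lemma f_dvd_charpoly_companion {A : Type*} [CommRing A] {n : ℕ} (f : A[X]) (hf : f.Monic)
    (hdf : f.natDegree = n) : f ∣ (companionMatrix n f).charpoly := by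
  rcases Nat.eq_zero_or_pos n with h0 | hn
  · have : f = 1 := by
      subst h0
      exact hf.natDegree_eq_zero.mp hdf
    simp [this]
  · set N := charmatrix (companionMatrix n f) with hN
    have key := Matrix.det_updateRow_sum N (⟨0, hn⟩ : Fin n) (fun i => (X : A[X])^(i:ℕ))
    simp only [pow_zero, one_smul] at key
    rw [companion_row_sum f hf hdf hn] at key
    rw [Matrix.det_updateRow_smul] at key
    exact ⟨_, key.symm⟩

lemma charpoly_conj' {R : Type*} [CommRing R] {k : Type*} [DecidableEq k] [Fintype k]
    (P P' N : Matrix k k R) (h : P * P' = 1) (h' : P' * P = 1) :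
    (P * N * P').charpoly = N.charpoly := by
  have key : charmatrix (P * N * P')
      = (P.map Polynomial.C) * charmatrix N * (P'.map Polynomial.C) := by
    simp only [charmatrix, ← RingHom.mapMatrix_apply]
    rw [mul_sub, sub_mul]
    congr 1
    · rw [← (Matrix.scalar_commute (X : R[X]) (fun r => Commute.all _ _)
        (RingHom.mapMatrix C P)).eq, Matrix.mul_assoc, ← _root_.map_mul, h,
        _root_.map_one, Matrix.mul_one]
    · rw [← _root_.map_mul, ← _root_.map_mul]
  rw [Matrix.charpoly, Matrix.charpoly, key, det_mul, det_mul, mul_comm, ← mul_assoc,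
    ← det_mul, ← Matrix.map_mul, h', Matrix.map_one _ (map_zero C) (map_one C), det_one, one_mul]


theorem symm_and_dvd_charpoly_of_sos_cert {A : Type*} [CommRing A] {n m : ℕ}
    (f : A[X]) (hf : f.Monic) (hdf : f.natDegree = n)
    (B : Matrix (Fin n) (Fin n) A) (hBsymm : B.IsSymm) (hBunit : IsUnit B.det)
    (hCB : companionMatrix n f * B = B * (companionMatrix n f)ᵀ)
    (s : A) (hs : IsSumSq s) (Q : Matrix (Fin m) (Fin n) A)
    (hsos : s • B = 1 + Qᵀ * Q) :
    letI C := companionMatrix n f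
    letI M : Matrix (Fin n ⊕ Fin m) (Fin n ⊕ Fin m) A :=
      Matrix.fromBlocks (C - Qᵀ * Q * Cᵀ) (C * Qᵀ) (Q * Cᵀ) 0
    M.IsSymm ∧ f ∣ M.charpoly := by
  set C := companionMatrix n f with hC
  have hQQ : Qᵀ * Q = s • B - 1 := by rw [hsos]; abel
  constructor
  · have h11 : (C - Qᵀ * Q * Cᵀ)ᵀ = C - Qᵀ * Q * Cᵀ := by
      rw [transpose_sub, transpose_mul, transpose_mul, transpose_transpose,
        transpose_transpose, hQQ]
      rw [mul_sub, sub_mul, mul_one, one_mul, mul_smul_comm, smul_mul_assoc, hCB]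
      abel
    rw [Matrix.IsSymm, fromBlocks_transpose, h11, transpose_mul, transpose_mul,
      transpose_transpose, transpose_transpose, transpose_zero]
  · have hM : fromBlocks (C - Qᵀ * Q * Cᵀ) (C * Qᵀ) (Q * Cᵀ)
        (0 : Matrix (Fin m) (Fin m) A) = (fromBlocks 1 (-Qᵀ) 0 1) *
        (fromBlocks C 0 (Q * Cᵀ) (-(Q * Cᵀ * Qᵀ))) * (fromBlocks 1 Qᵀ 0 1) := by
      simp only [fromBlocks_multiply, Matrix.mul_one, Matrix.one_mul, Matrix.mul_zero,
        Matrix.zero_mul, add_zero, zero_add, Matrix.neg_mul, Matrix.mul_neg]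
      rw [Matrix.fromBlocks_inj]
      refine ⟨?_, ?_, ?_, ?_⟩ <;>
        · simp only [Matrix.add_mul, Matrix.neg_mul, Matrix.mul_neg, Matrix.mul_assoc,
            neg_neg, sub_eq_add_neg]
          try abel
    rw [hM, charpoly_conj']
    · rw [Matrix.charpoly_fromBlocks_zero₁₂]
      exact Dvd.dvd.mul_right (f_dvd_charpoly_companion f hf hdf) _
    · simp [fromBlocks_multiply, ← fromBlocks_one]
    · simp [fromBlocks_multiply, ← fromBlocks_one]
end

section
/- Let A be an integral domain whose real spectrum is empty (equivalently, −1 is a sum of squares in the quotient field images; concretely assume −1 ∈ ΣA²). Then every element θ integral over A (in an algebraic closure of Quot(A)) is an eigenvalue of a symmetric matrix over A. -/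
open Matrix

theorem eigenvalue_of_neg_one_isSumSq {A : Type*} [CommRing A] [IsDomain A]
    (h : IsSumSq (-1 : A))
    {L : Type*} [Field L] [Algebra A L]
    (hinj : Function.Injective (algebraMap A L))
    (θ : L) (hθ : IsIntegral A θ) :
    ∃ (r : ℕ) (M : Matrix (Fin r) (Fin r) A),
      M.IsSymm ∧ Polynomial.aeval θ M.charpoly = 0 := by
  classical
  -- extract the sum of squares
  obtain ⟨k, s, hs⟩ : ∃ (k : ℕ) (s : Fin k → A), (∑ i, s i * s i) = -1 := by
    suffices H : ∀ S : A, IsSumSq S → ∃ (k : ℕ) (s : Fin k → A), (∑ i, s i * s i) = S from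
      H _ h
    intro S hS
    induction hS with
    | zero => exact ⟨0, fun _ => 0, by simp⟩
    | sq_add a pS ih =>
      obtain ⟨k, t, ht⟩ := ih
      exact ⟨k + 1, Fin.cons a t, by simp [Fin.sum_univ_succ, ht]⟩
  obtain ⟨p, pmonic, proot⟩ := hθ
  set f := algebraMap A L with hf
  set n := p.natDegree with hn
  have hn0 : 0 < n := by
    rcases Nat.eq_zero_or_pos n with h0 | h0
    · exfalso
      have hp1 : p = 1 := pmonic.natDegree_eq_zero.mp h0
      rw [hp1] at proot
      simp at proot
    · exact h0
  -- the companion matrix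
  set Cm : Matrix (Fin n) (Fin n) A := fun i j =>
    if (i : ℕ) + 1 = n then -(p.coeff j) else if (j : ℕ) = (i : ℕ) + 1 then 1 else 0
    with hCm
  set v : Fin n → L := fun i => θ ^ (i : ℕ) with hv
  have hCv : (Cm.map f).mulVec v = θ • v := by
    funext i
    show ∑ j, f (Cm i j) * v j = θ • v i
    by_cases hi : (i : ℕ) + 1 = n
    · have hsum : ∑ j ∈ Finset.range n, f (p.coeff j) * θ ^ j = -(θ ^ n) := by
        have h0 := proot
        rw [Polynomial.eval₂_eq_sum_range, Finset.sum_range_succ] at h0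
        have hcn : p.coeff n = 1 := pmonic.coeff_natDegree
        rw [hcn, _root_.map_one, one_mul] at h0
        linear_combination h0
      have hrow : ∀ j : Fin n, f (Cm i j) * v j = -(f (p.coeff j) * θ ^ (j : ℕ)) := by
        intro j
        simp [hCm, hi, hv]
      rw [Finset.sum_congr rfl fun j _ => hrow j]
      rw [Finset.sum_neg_distrib]
      rw [Fin.sum_univ_eq_sum_range (fun j => f (p.coeff j) * θ ^ j) n, hsum, neg_neg]
      show θ ^ n = θ • v i
      rw [hv]
      simp only [smul_eq_mul]
      rw [← pow_succ' θ (i : ℕ), hi]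
    · have hlt : (i : ℕ) + 1 < n := lt_of_le_of_ne i.isLt hi
      set j0 : Fin n := ⟨(i : ℕ) + 1, hlt⟩ with hj0
      have hrow : ∀ j : Fin n, f (Cm i j) * v j
          = if j = j0 then θ ^ ((i : ℕ) + 1) else 0 := by
        intro j
        by_cases hj : j = j0
        · subst hj
          simp [hCm, hi, hv, hj0]
        · have hne : (j : ℕ) ≠ (i : ℕ) + 1 := by
            intro hc
            exact hj (Fin.ext (by simp [hj0, hc]))
          simp [hCm, hi, hne, hv, hj]
      rw [Finset.sum_congr rfl fun j _ => hrow j, Finset.sum_ite_eq' Finset.univ j0]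
      simp only [Finset.mem_univ, if_true]
      rw [hv]
      simp only [smul_eq_mul]
      rw [← pow_succ' θ (i : ℕ)]
  -- the big symmetric matrix
  set Mb : Matrix (Fin n ⊕ Fin k × Fin n) (Fin n ⊕ Fin k × Fin n) A := fun x y =>
    match x, y with
    | Sum.inl i, Sum.inl i' => Cm i i' + Cm i' i
    | Sum.inl i, Sum.inr jl => s jl.1 * Cm jl.2 i
    | Sum.inr jl, Sum.inl i => s jl.1 * Cm jl.2 i
    | Sum.inr _, Sum.inr _ => 0
    with hMb
  have hsymm : Mb.IsSymm := by
    show Mbᵀ = Mb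
    funext x y
    simp only [Matrix.transpose_apply]
    rcases x with i | ⟨j, l⟩ <;> rcases y with i' | ⟨j', l'⟩ <;>
      simp [hMb, Matrix.transpose_apply, add_comm]
  set w : Fin n ⊕ Fin k × Fin n → L :=
    Sum.elim v (fun jl => f (s jl.1) * v jl.2) with hw
  have hMw : (Mb.map f).mulVec w = θ • w := by
    funext x
    show ∑ y, f (Mb x y) * w y = θ • w x
    rw [Fintype.sum_sum_type]
    rcases x with i | ⟨j, l⟩
    · have h1 : ∑ i' : Fin n, f (Mb (Sum.inl i) (Sum.inl i')) * w (Sum.inl i')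
          = (∑ i' : Fin n, f (Cm i i') * v i') + ∑ i' : Fin n, f (Cm i' i) * v i' := by
        rw [← Finset.sum_add_distrib]
        refine Finset.sum_congr rfl fun i' _ => ?_
        simp [hMb, hw, map_add, add_mul]
      have h2 : ∑ jl : Fin k × Fin n, f (Mb (Sum.inl i) (Sum.inr jl)) * w (Sum.inr jl)
          = -(∑ i' : Fin n, f (Cm i' i) * v i') := by
        rw [Fintype.sum_prod_type]
        have hinner : ∀ j : Fin k,
            ∑ l : Fin n, f (Mb (Sum.inl i) (Sum.inr (j, l))) * w (Sum.inr (j, l))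
            = (f (s j) * f (s j)) * ∑ l : Fin n, f (Cm l i) * v l := by
          intro j
          rw [Finset.mul_sum]
          refine Finset.sum_congr rfl fun l _ => ?_
          show f (s j * Cm l i) * (f (s j) * v l) = f (s j) * f (s j) * (f (Cm l i) * v l)
          rw [_root_.map_mul]
          ring
        rw [Finset.sum_congr rfl fun j _ => hinner j, ← Finset.sum_mul]
        have : ∑ j : Fin k, f (s j) * f (s j) = -1 := by
          have : ∑ j : Fin k, f (s j) * f (s j) = f (∑ j : Fin k, s j * s j) := by
            rw [map_sum]
            exact Finset.sum_congr rfl fun j _ => (_root_.map_mul f _ _).symm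
          rw [this, hs, _root_.map_neg, _root_.map_one]
        rw [this]
        ring
      rw [h1, h2]
      have hC : ∑ i' : Fin n, f (Cm i i') * v i' = θ * v i := by
        have := congrFun hCv i
        simpa [Matrix.mulVec, dotProduct, smul_eq_mul] using this
      rw [hC]
      show θ * v i + _ + _ = θ • w (Sum.inl i)
      simp [hw]
    · have h2 : ∑ jl : Fin k × Fin n, f (Mb (Sum.inr (j, l)) (Sum.inr jl)) * w (Sum.inr jl)
          = 0 := by
        refine Finset.sum_eq_zero fun jl _ => ?_
        simp [hMb]
      have h1 : ∑ i : Fin n, f (Mb (Sum.inr (j, l)) (Sum.inl i)) * w (Sum.inl i)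
          = f (s j) * ∑ i : Fin n, f (Cm l i) * v i := by
        rw [Finset.mul_sum]
        refine Finset.sum_congr rfl fun i _ => ?_
        show f (s j * Cm l i) * v i = f (s j) * (f (Cm l i) * v i)
        rw [_root_.map_mul]
        ring
      have hC : ∑ i : Fin n, f (Cm l i) * v i = θ * v l := by
        have := congrFun hCv l
        simpa [Matrix.mulVec, dotProduct, smul_eq_mul] using this
      rw [h1, h2, hC]
      show f (s j) * (θ * v l) + 0 = θ • w (Sum.inr (j, l))
      simp [hw]
      ring
  have hw0 : w ≠ 0 := by
    intro hweq
    have h1 : w (Sum.inl ⟨0, hn0⟩) = 0 := by rw [hweq]; rfl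
    rw [hw] at h1
    simp [hv] at h1
  have hdet : (Matrix.scalar (Fin n ⊕ Fin k × Fin n) θ - Mb.map f).det = 0 := by
    rw [← Matrix.exists_mulVec_eq_zero_iff]
    refine ⟨w, hw0, ?_⟩
    rw [Matrix.sub_mulVec, hMw]
    have : (Matrix.scalar (Fin n ⊕ Fin k × Fin n) θ).mulVec w = θ • w := by
      funext x
      rw [Matrix.scalar_apply, Matrix.mulVec_diagonal]
      rfl
    rw [this, sub_self]
  refine ⟨Fintype.card (Fin n ⊕ Fin k × Fin n),
    Matrix.reindex (Fintype.equivFin _) (Fintype.equivFin _) Mb, ?_, ?_⟩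
  · exact hsymm.submatrix _
  · rw [Matrix.charpoly_reindex, Polynomial.aeval_def, ← Polynomial.eval_map,
      ← Matrix.charpoly_map]
    unfold Matrix.charpoly
    rw [eval_det, Matrix.matPolyEquiv_charmatrix, Polynomial.eval_sub,
      Polynomial.eval_X, Polynomial.eval_C]
    exact hdet
end
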